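/- Let (A, B, C) be a recollement of abelian categories where B and C have enough projective objects, and suppose i* and j_* are exact. Let (T', F') and (T'', F'') be cotilting torsion pairs in A and C respectively, and let (T, F) be the glued torsion pair in B, where T = {B : i*(B) ∈ T', j^*(B) ∈ T''} and F = {B : i^!(B) ∈ F', j^*(B) ∈ F''}. Then (T, F) is a cotilting torsion pair in B, i.e., F contains all projective objects of B. -/

import Mathlib

open CategoryTheory Limits

universe u₁ u₂ u₃ v₁ v₂ v₃

/-- A recollement of abelian categories `(𝒜, ℬ, 𝒞)`. -/
structure Recollement (𝒜 : Type u₁) (ℬ : Type u₂) (𝒞 : Type u₃)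
    [Category.{v₁} 𝒜] [Category.{v₂} ℬ] [Category.{v₃} 𝒞]
    [Abelian 𝒜] [Abelian ℬ] [Abelian 𝒞] where
  /-- `i^* : ℬ → 𝒜` -/
  iStar : ℬ ⥤ 𝒜
  /-- `i_* : 𝒜 → ℬ` -/
  iIns : 𝒜 ⥤ ℬ
  /-- `i^! : ℬ → 𝒜` -/
  iShriek : ℬ ⥤ 𝒜
  /-- `j_! : 𝒞 → ℬ` -/
  jShriek : 𝒞 ⥤ ℬ
  /-- `j^* : ℬ → 𝒞` -/
  jStar : ℬ ⥤ 𝒞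
  /-- `j_* : 𝒞 → ℬ` -/
  jIns : 𝒞 ⥤ ℬ
  iStar_additive : iStar.Additive
  iIns_additive : iIns.Additive
  iShriek_additive : iShriek.Additive
  jShriek_additive : jShriek.Additive
  jStar_additive : jStar.Additive
  jIns_additive : jIns.Additive
  /-- the adjoint pair `(i^*, i_*)` -/
  adj₁ : iStar ⊣ iIns
  /-- the adjoint pair `(i_*, i^!)` -/
  adj₂ : iIns ⊣ iShriek
  /-- the adjoint pair `(j_!, j^*)` -/
  adj₃ : jShriek ⊣ jStar
  /-- the adjoint pair `(j^*, j_*)` -/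
  adj₄ : jStar ⊣ jIns
  iIns_full : iIns.Full
  iIns_faithful : iIns.Faithful
  jShriek_full : jShriek.Full
  jShriek_faithful : jShriek.Faithful
  jIns_full : jIns.Full
  jIns_faithful : jIns.Faithful
  /-- `Im i_* = Ker j^*` -/
  essImage_iIns_eq_ker_jStar : ∀ b : ℬ, iIns.essImage b ↔ IsZero (jStar.obj b)

/-- A pair of full subcategories (given as sets of objects, closed under
isomorphisms) `(T, F)` of an abelian category is a torsion pair if all
morphisms from `T` to `F` vanish and every object fits in a short exact
sequence with first term in `T` and third term in `F`. -/
structure IsTorsionPair {𝒜 : Type u₁} [Category.{v₁} 𝒜] [Abelian 𝒜]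
    (T F : Set 𝒜) : Prop where
  mem_T_of_iso : ∀ {X Y : 𝒜}, (X ≅ Y) → X ∈ T → Y ∈ T
  mem_F_of_iso : ∀ {X Y : 𝒜}, (X ≅ Y) → X ∈ F → Y ∈ F
  hom_eq_zero : ∀ {X Y : 𝒜}, X ∈ T → Y ∈ F → ∀ f : X ⟶ Y, f = 0
  exists_ses : ∀ M : 𝒜, ∃ (X Y : 𝒜) (f : X ⟶ M) (g : M ⟶ Y) (w : f ≫ g = 0),
    X ∈ T ∧ Y ∈ F ∧ (ShortComplex.mk f g w).ShortExact

section Aux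

variable {𝒟 : Type u₁} [Category.{v₁} 𝒟] [Abelian 𝒟] {T F : Set 𝒟}

/-- An object all of whose incoming maps from `T` vanish lies in `F`. -/
lemma IsTorsionPair.mem_F_of_hom_zero (h : IsTorsionPair T F) {M : 𝒟}
    (hM : ∀ X ∈ T, ∀ f : X ⟶ M, f = 0) : M ∈ F := by
  obtain ⟨X, Y, f, g, w, hX, hY, hse⟩ := h.exists_ses M
  have hf : f = 0 := hM X hX f
  haveI : Mono g := hse.exact.mono_g hf
  haveI : Epi g := hse.epi_g
  haveI : IsIso g := isIso_of_mono_of_epi g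
  exact h.mem_F_of_iso (asIso g).symm hY

/-- `F` is closed under subobjects. -/
lemma IsTorsionPair.mem_F_of_mono (h : IsTorsionPair T F) {M N : 𝒟}
    (m : M ⟶ N) [Mono m] (hN : N ∈ F) : M ∈ F :=
  h.mem_F_of_hom_zero fun X hX f => by
    have : f ≫ m = 0 := h.hom_eq_zero hX hN _
    rwa [← cancel_mono m, zero_comp]

/-- Given a cotilting torsion pair, every projective object lies in `F`. -/
lemma IsTorsionPair.projective_mem_F (h : IsTorsionPair T F)
    (hc : ∀ M : 𝒟, ∃ X ∈ F, ∃ f : X ⟶ M, Epi f) {P : 𝒟} (hP : Projective P) :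
    P ∈ F := by
  obtain ⟨X, hX, f, hf⟩ := hc P
  haveI := hP; haveI := hf
  have hs : Projective.factorThru (𝟙 P) f ≫ f = 𝟙 P := Projective.factorThru_comp _ _
  set s := Projective.factorThru (𝟙 P) f
  haveI : Mono s := mono_of_mono_fac hs
  exact h.mem_F_of_mono s hX

end Aux

/-- Glueing of cotilting torsion pairs: given a recollement `(𝒜, ℬ, 𝒞)` with
`ℬ`, `𝒞` having enough projectives and `i^*`, `j_*` exact, if `(T', F')` and
`(T'', F'')` are cotilting torsion pairs in `𝒜` and `𝒞` respectively, then the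
glued torsion pair `(T, F)` in `ℬ` is cotilting, i.e. `F` contains all
projective objects of `ℬ`. -/
theorem stmt14 (𝒜 : Type u₁) (ℬ : Type u₂) (𝒞 : Type u₃)
    [Category.{v₁} 𝒜] [Category.{v₂} ℬ] [Category.{v₃} 𝒞]
    [Abelian 𝒜] [Abelian ℬ] [Abelian 𝒞]
    [EnoughProjectives ℬ] [EnoughProjectives 𝒞] (R : Recollement 𝒜 ℬ 𝒞)
    (hiStar₁ : PreservesFiniteLimits R.iStar)
    (hiStar₂ : PreservesFiniteColimits R.iStar)
    (hjIns₁ : PreservesFiniteLimits R.jIns)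
    (hjIns₂ : PreservesFiniteColimits R.jIns)
    (T' F' : Set 𝒜) (T'' F'' : Set 𝒞)
    (h' : IsTorsionPair T' F') (h'' : IsTorsionPair T'' F'')
    -- `(T', F')` and `(T'', F'')` are cotilting
    (hc' : ∀ M : 𝒜, ∃ X ∈ F', ∃ f : X ⟶ M, Epi f)
    (hc'' : ∀ M : 𝒞, ∃ X ∈ F'', ∃ f : X ⟶ M, Epi f) :
    ∀ P : ℬ, Projective P →
      P ∈ {B : ℬ | R.iShriek.obj B ∈ F' ∧ R.jStar.obj B ∈ F''} := by
  intro P hP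
  haveI := R.iStar_additive; haveI := R.iIns_additive; haveI := R.iShriek_additive
  haveI := R.jShriek_additive; haveI := R.jStar_additive; haveI := R.jIns_additive
  haveI := R.iIns_full; haveI := R.iIns_faithful
  haveI := R.jIns_full; haveI := R.jIns_faithful
  haveI := hiStar₁; haveI := hjIns₂
  haveI : PreservesColimits R.iIns := R.adj₂.leftAdjoint_preservesColimits
  haveI : PreservesLimits R.jStar := R.adj₃.rightAdjoint_preservesLimits
  -- `j^* P` is projective in `𝒞`
  have hjP : Projective (R.jStar.obj P) := R.adj₄.map_projective P hP
  -- `i^* P` is projective in `𝒜`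
  have hiP : Projective (R.iStar.obj P) := R.adj₁.map_projective P hP
  have hiPF : R.iStar.obj P ∈ F' := h'.projective_mem_F hc' hiP
  refine ⟨?_, h''.projective_mem_F hc'' hjP⟩
  -- It remains to show `i^! P ∈ F'`.
  refine h'.mem_F_of_hom_zero fun X hX a => ?_
  -- transpose `a : X ⟶ i^! P` to `g : i_* X ⟶ P`
  set g : R.iIns.obj X ⟶ P := (R.adj₂.homEquiv X P).symm a with hg
  suffices hg0 : g = 0 by
    have : a = (R.adj₂.homEquiv X P) g := ((R.adj₂.homEquiv X P).apply_symm_apply a).symm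
    rw [this, hg0, Adjunction.homEquiv_unit, Functor.map_zero, comp_zero]
  -- the unit of `(j^*, j_*)` at `P`
  set η : P ⟶ R.jIns.obj (R.jStar.obj P) := R.adj₄.unit.app P with hη
  -- `j^*(i_* X)` is zero
  have hz : IsZero (R.jStar.obj (R.iIns.obj X)) :=
    (R.essImage_iIns_eq_ker_jStar _).mp ⟨X, ⟨Iso.refl _⟩⟩
  -- hence `g ≫ η = 0`
  have hgη : g ≫ η = 0 := by
    have h1 : g ≫ η =
        (R.adj₄.homEquiv _ _) ((R.adj₄.homEquiv _ _).symm (g ≫ η)) :=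
      ((R.adj₄.homEquiv _ _).apply_symm_apply _).symm
    have h2 : (R.adj₄.homEquiv (R.iIns.obj X) (R.jStar.obj P)).symm (g ≫ η) = 0 :=
      hz.eq_of_src _ _
    rw [h1, h2, Adjunction.homEquiv_unit, Functor.map_zero, comp_zero]
  -- so `g` factors through the kernel `K` of `η`
  set l : R.iIns.obj X ⟶ kernel η := kernel.lift η g hgη with hl
  have hlι : l ≫ kernel.ι η = g := kernel.lift_ι η g hgη
  -- `j^*(η)` is an isomorphism
  haveI : IsIso (R.jStar.map η) := by
    have htri : R.jStar.map η ≫ R.adj₄.counit.app (R.jStar.obj P) = 𝟙 _ :=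
      R.adj₄.left_triangle_components P
    exact IsIso.of_isIso_fac_right htri
  -- hence `j^*(kernel η)` is zero
  have hzK : IsZero (R.jStar.obj (kernel η)) := by
    refine IsZero.of_iso ?_ ((PreservesKernel.iso R.jStar η) ≪≫ kernel.ofMono _)
    exact isZero_zero _
  -- so `kernel η` lies in the essential image of `i_*`
  obtain ⟨A, ⟨e⟩⟩ := (R.essImage_iIns_eq_ker_jStar (kernel η)).mpr hzK
  -- `i^*(g) = 0` since `X ∈ T'` and `i^* P ∈ F'`
  haveI : IsIso (R.adj₁.counit.app X) := inferInstance
  have hig : R.iStar.map g = 0 := by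
    have hψ : inv (R.adj₁.counit.app X) ≫ R.iStar.map g = 0 :=
      h'.hom_eq_zero hX hiPF _
    calc R.iStar.map g
        = R.adj₁.counit.app X ≫ inv (R.adj₁.counit.app X) ≫ R.iStar.map g := by
          rw [IsIso.hom_inv_id_assoc]
      _ = 0 := by rw [hψ, comp_zero]
  -- hence `i^*(l) = 0` since `i^*(kernel.ι η)` is mono
  haveI : Mono (R.iStar.map (kernel.ι η)) :=
    R.iStar.map_mono (kernel.ι η)
  have hil : R.iStar.map l = 0 := by
    have : R.iStar.map l ≫ R.iStar.map (kernel.ι η) = 0 := by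
      rw [← Functor.map_comp, hlι, hig]
    rwa [← cancel_mono (R.iStar.map (kernel.ι η)), zero_comp]
  -- transport along `e : i_* A ≅ kernel η` and use full faithfulness of `i_*`
  set m : R.iIns.obj X ⟶ R.iIns.obj A := l ≫ e.inv with hm
  set b : X ⟶ A := R.iIns.preimage m with hb
  have hmb : R.iIns.map b = m := R.iIns.map_preimage m
  have him : R.iStar.map m = 0 := by
    rw [hm, Functor.map_comp, hil, zero_comp]
  -- counit naturality forces `b = 0`
  have hnat : R.iStar.map (R.iIns.map b) ≫ R.adj₁.counit.app A =
      R.adj₁.counit.app X ≫ b := R.adj₁.counit.naturality b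
  have hb0 : b = 0 := by
    have : R.adj₁.counit.app X ≫ b = 0 := by
      rw [← hnat, hmb, him, zero_comp]
    rwa [← cancel_epi (R.adj₁.counit.app X), comp_zero]
  have hm0 : m = 0 := by rw [← hmb, hb0, Functor.map_zero]
  have hl0 : l = 0 := by
    have : l = m ≫ e.hom := by rw [hm, Category.assoc, e.inv_hom_id, Category.comp_id]
    rw [this, hm0, zero_comp]
  rw [← hlι, hl0, zero_comp]
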